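/- Let V* : S → ℝ satisfy T_{*,h} V* = V*. Then there exists a unique pair of profiles (y*, z*) satisfying both of the following: (i) T_{y*,z*,h} V* = V* (so V* is the fixed point of T_{y*,z*,h}); (ii) for every max-player profile z and every V' : S → ℝ with T_{y*,z,h} V' = V' one has V'(s) ≤ V*(s) for all s, and for every min-player profile y and every V'' : S → ℝ with T_{y,z*,h} V'' = V'' one has V*(s) ≤ V''(s) for all s. -/

import Mathlib

open scoped BigOperators

noncomputable section

variable {S A B : Type*} [Fintype S] [Fintype A] [Fintype B]

/-- Regularized Q-value. -/
def QV (r : S → A → B → ℝ) (P : S → A → B → S → ℝ) (γ : ℝ)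
    (V : S → ℝ) (s : S) (a : A) (b : B) : ℝ :=
  r s a b + γ * ∑ s', P s a b s' * V s'

/-- Min–max Bellman operator for a fixed policy pair. -/
def Tyz (r : S → A → B → ℝ) (P : S → A → B → S → ℝ) (γ : ℝ)
    (y : S → A → ℝ) (z : S → B → ℝ) (V : S → ℝ) (s : S) : ℝ :=
  ∑ a, ∑ b, y s a * z s b * QV r P γ V s a b

/-- Soft min–max Bellman operator. -/
def Tsoft (r : S → A → B → ℝ) (P : S → A → B → S → ℝ) (γ : ℝ)
    (h : S → (A → ℝ) → (B → ℝ) → ℝ)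
    (y : S → A → ℝ) (z : S → B → ℝ) (V : S → ℝ) (s : S) : ℝ :=
  Tyz r P γ y z V s + h s (y s) (z s)

/-- Soft min–max Bellman optimality operator. -/
def TstarH (r : S → A → B → ℝ) (P : S → A → B → S → ℝ) (γ : ℝ)
    (h : S → (A → ℝ) → (B → ℝ) → ℝ) (V : S → ℝ) (s : S) : ℝ :=
  ⨅ u : stdSimplex ℝ A, ⨆ w : stdSimplex ℝ B,
    (∑ a, ∑ b, u.1 a * w.1 b * QV r P γ V s a b) + h s u.1 w.1

/-- Min-player profiles: a mixed strategy at each state. -/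
def MinProf (S A : Type*) [Fintype A] : Type _ :=
  {y : S → A → ℝ // ∀ s, y s ∈ stdSimplex ℝ A}

/-- Max-player profiles: a mixed strategy at each state. -/
def MaxProf (S B : Type*) [Fintype B] : Type _ :=
  {z : S → B → ℝ // ∀ s, z s ∈ stdSimplex ℝ B}


section Minimax

variable {E F : Type*} [NormedAddCommGroup E] [NormedSpace ℝ E]
  [NormedAddCommGroup F] [NormedSpace ℝ F]

/-- Komiya's two-point lemma. -/
lemma komiya_two {f : E → F → ℝ} (hf : Continuous fun p : E × F => f p.1 p.2)
    {X : Set E} (hXc : IsCompact X) (hXconv : Convex ℝ X) (hXne : X.Nonempty)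
    {Y : Set F} (hYconv : Convex ℝ Y)
    (hcv : ∀ w ∈ Y, ConvexOn ℝ X fun u => f u w)
    (hcc : ∀ u ∈ X, ConcaveOn ℝ Y fun w => f u w)
    {y₁ y₂ : F} (hy₁ : y₁ ∈ Y) (hy₂ : y₂ ∈ Y)
    {α : ℝ} (hα : ∀ x ∈ X, α < max (f x y₁) (f x y₂)) :
    ∃ y ∈ Y, ∀ x ∈ X, α < f x y := by
  by_contra hcon
  push_neg at hcon
  -- continuity of the slices
  have hf1 : Continuous fun x => f x y₁ := hf.comp (continuous_id.prodMk continuous_const)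
  have hf2 : Continuous fun x => f x y₂ := hf.comp (continuous_id.prodMk continuous_const)
  -- minimum of max over X
  obtain ⟨x₀, hx₀X, hx₀min⟩ := hXc.exists_isMinOn hXne ((hf1.max hf2).continuousOn)
  set m := max (f x₀ y₁) (f x₀ y₂) with hm
  have hαm : α < m := hα x₀ hx₀X
  set β := (α + m) / 2 with hβdef
  have hαβ : α < β := by rw [hβdef]; linarith
  have hβm : β < m := by rw [hβdef]; linarith
  have hβ : ∀ x ∈ X, β < max (f x y₁) (f x y₂) := fun x hx => lt_of_lt_of_le hβm (hx₀min hx)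
  -- the segment from y₁ to y₂
  set seg : ℝ → F := fun t => y₁ + t • (y₂ - y₁) with hsegdef
  have hsegcont : Continuous seg := continuous_const.add (continuous_id.smul continuous_const)
  have hseg_eq : ∀ t : ℝ, seg t = (1 - t) • y₁ + t • y₂ := by
    intro t
    rw [hsegdef]
    simp only [smul_sub, sub_smul, one_smul]
    abel
  have hsegY : ∀ t ∈ Set.Icc (0:ℝ) 1, seg t ∈ Y := by
    intro t ht
    rw [hseg_eq]
    exact hYconv hy₁ hy₂ (by linarith [ht.2]) ht.1 (by ring)
  have hseg0 : seg 0 = y₁ := by rw [hsegdef]; simp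
  have hseg1 : seg 1 = y₂ := by rw [hsegdef]; simp
  -- concavity along the segment
  have hsegcc : ∀ x ∈ X, ∀ t ∈ Set.Icc (0:ℝ) 1, min (f x y₁) (f x y₂) ≤ f x (seg t) := by
    intro x hx t ht
    rw [hseg_eq]
    calc min (f x y₁) (f x y₂)
        = (1 - t) * min (f x y₁) (f x y₂) + t * min (f x y₁) (f x y₂) := by ring
      _ ≤ (1 - t) * f x y₁ + t * f x y₂ := by
          gcongr
          · linarith [ht.2]
          · exact min_le_left _ _
          · exact ht.1
          · exact min_le_right _ _
      _ ≤ f x ((1 - t) • y₁ + t • y₂) := by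
          have := (hcc x hx).2 hy₁ hy₂ (by linarith [ht.2] : (0:ℝ) ≤ 1 - t) ht.1 (by ring)
          simpa using this
  -- the two closed pieces
  set B₁ := {x ∈ X | f x y₁ ≤ β} with hB₁def
  set B₂ := {x ∈ X | f x y₂ ≤ β} with hB₂def
  have hB₁closed : IsClosed B₁ := (hXc.isClosed.inter (isClosed_Iic.preimage hf1))
  have hB₂closed : IsClosed B₂ := (hXc.isClosed.inter (isClosed_Iic.preimage hf2))
  have hdisj : ∀ x, x ∈ B₁ → x ∉ B₂ := by
    intro x hx1 hx2
    have h1 : max (f x y₁) (f x y₂) ≤ β := max_le hx1.2 hx2.2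
    exact absurd h1 (not_le.2 (hβ x hx1.1))
  -- the sets I and J
  set I := {t ∈ Set.Icc (0:ℝ) 1 | ∃ x ∈ X, f x (seg t) ≤ α ∧ f x y₁ ≤ β} with hIdef
  set J := {t ∈ Set.Icc (0:ℝ) 1 | ∃ x ∈ X, f x (seg t) ≤ α ∧ f x y₂ ≤ β} with hJdef
  have hseg2cont : Continuous fun p : ℝ × E => f p.2 (seg p.1) :=
    hf.comp (continuous_snd.prodMk (hsegcont.comp continuous_fst))
  -- closedness of I and J via compact projections
  have hIclosed : IsClosed I := by
    have : I = Prod.fst '' {p : ℝ × E | p.1 ∈ Set.Icc (0:ℝ) 1 ∧ p.2 ∈ X ∧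
        f p.2 (seg p.1) ≤ α ∧ f p.2 y₁ ≤ β} := by
      ext t
      constructor
      · rintro ⟨ht, x, hx, h1, h2⟩; exact ⟨(t, x), ⟨ht, hx, h1, h2⟩, rfl⟩
      · rintro ⟨⟨t', x⟩, ⟨ht, hx, h1, h2⟩, rfl⟩; exact ⟨ht, x, hx, h1, h2⟩
    rw [this]
    have hKclosed : IsClosed {p : ℝ × E | p.1 ∈ Set.Icc (0:ℝ) 1 ∧ p.2 ∈ X ∧
        f p.2 (seg p.1) ≤ α ∧ f p.2 y₁ ≤ β} := by
      refine ((isClosed_Icc.preimage continuous_fst).inter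
        ((hXc.isClosed.preimage continuous_snd).inter
        ((isClosed_Iic.preimage hseg2cont).inter
        (isClosed_Iic.preimage (hf1.comp continuous_snd)))))
    have hKcompact : IsCompact {p : ℝ × E | p.1 ∈ Set.Icc (0:ℝ) 1 ∧ p.2 ∈ X ∧
        f p.2 (seg p.1) ≤ α ∧ f p.2 y₁ ≤ β} := by
      refine ((isCompact_Icc (a := (0:ℝ)) (b := 1)).prod hXc).of_isClosed_subset hKclosed ?_
      rintro ⟨t, x⟩ ⟨ht, hx, _, _⟩
      exact ⟨ht, hx⟩
    exact (hKcompact.image continuous_fst).isClosed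
  have hJclosed : IsClosed J := by
    have : J = Prod.fst '' {p : ℝ × E | p.1 ∈ Set.Icc (0:ℝ) 1 ∧ p.2 ∈ X ∧
        f p.2 (seg p.1) ≤ α ∧ f p.2 y₂ ≤ β} := by
      ext t
      constructor
      · rintro ⟨ht, x, hx, h1, h2⟩; exact ⟨(t, x), ⟨ht, hx, h1, h2⟩, rfl⟩
      · rintro ⟨⟨t', x⟩, ⟨ht, hx, h1, h2⟩, rfl⟩; exact ⟨ht, x, hx, h1, h2⟩
    rw [this]
    have hKclosed : IsClosed {p : ℝ × E | p.1 ∈ Set.Icc (0:ℝ) 1 ∧ p.2 ∈ X ∧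
        f p.2 (seg p.1) ≤ α ∧ f p.2 y₂ ≤ β} := by
      refine ((isClosed_Icc.preimage continuous_fst).inter
        ((hXc.isClosed.preimage continuous_snd).inter
        ((isClosed_Iic.preimage hseg2cont).inter
        (isClosed_Iic.preimage (hf2.comp continuous_snd)))))
    have hKcompact : IsCompact {p : ℝ × E | p.1 ∈ Set.Icc (0:ℝ) 1 ∧ p.2 ∈ X ∧
        f p.2 (seg p.1) ≤ α ∧ f p.2 y₂ ≤ β} := by
      refine ((isCompact_Icc (a := (0:ℝ)) (b := 1)).prod hXc).of_isClosed_subset hKclosed ?_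
      rintro ⟨t, x⟩ ⟨ht, hx, _, _⟩
      exact ⟨ht, hx⟩
    exact (hKcompact.image continuous_fst).isClosed
  -- I and J cover Icc 0 1
  have hcover : Set.Icc (0:ℝ) 1 ⊆ I ∪ J := by
    intro t ht
    obtain ⟨x, hxX, hxα⟩ := hcon (seg t) (hsegY t ht)
    have hmin : min (f x y₁) (f x y₂) ≤ β := le_trans (hsegcc x hxX t ht) (le_trans hxα hαβ.le)
    rcases min_le_iff.1 hmin with h | h
    · exact Or.inl ⟨ht, x, hxX, hxα, h⟩
    · exact Or.inr ⟨ht, x, hxX, hxα, h⟩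
  have h0I : (0:ℝ) ∈ I := by
    obtain ⟨x, hxX, hxα⟩ := hcon y₁ hy₁
    exact ⟨by norm_num, x, hxX, by rwa [hseg0], le_trans hxα hαβ.le⟩
  have h1J : (1:ℝ) ∈ J := by
    obtain ⟨x, hxX, hxα⟩ := hcon y₂ hy₂
    exact ⟨by norm_num, x, hxX, by rwa [hseg1], le_trans hxα hαβ.le⟩
  -- I and J are disjoint (via connectedness of the sublevel set)
  have hIJdisj : ∀ t, t ∈ I → t ∉ J := by
    rintro t ⟨ht, x₁, hx₁X, hx₁α, hx₁β⟩ ⟨_, x₂, hx₂X, hx₂α, hx₂β⟩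
    set Bz := {x ∈ X | f x (seg t) ≤ β} with hBzdef
    have hBzconv : Convex ℝ Bz := (hcv (seg t) (hsegY t ht)).convex_le β
    have hBzsub : Bz ⊆ B₂ᶜ ∪ B₁ᶜ := by
      intro x hx
      have hmin : min (f x y₁) (f x y₂) ≤ β := le_trans (hsegcc x hx.1 t ht) hx.2
      rcases min_le_iff.1 hmin with h | h
      · exact Or.inl (hdisj x ⟨hx.1, h⟩)
      · right
        intro hx1
        exact hdisj x hx1 ⟨hx.1, h⟩
    have hx₁Bz : x₁ ∈ Bz := ⟨hx₁X, le_trans hx₁α hαβ.le⟩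
    have hx₂Bz : x₂ ∈ Bz := ⟨hx₂X, le_trans hx₂α hαβ.le⟩
    have hpre : IsPreconnected Bz := hBzconv.isPreconnected
    obtain ⟨x, hxBz, hxu, hxv⟩ := hpre B₂ᶜ B₁ᶜ hB₂closed.isOpen_compl hB₁closed.isOpen_compl
      hBzsub ⟨x₁, hx₁Bz, hdisj x₁ ⟨hx₁X, hx₁β⟩⟩ ⟨x₂, hx₂Bz, fun hx1 => hdisj x₂ hx1 ⟨hx₂X, hx₂β⟩⟩
    have hmin : min (f x y₁) (f x y₂) ≤ β := le_trans (hsegcc x hxBz.1 t ht) hxBz.2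
    rcases min_le_iff.1 hmin with h | h
    · exact hxv ⟨hxBz.1, h⟩
    · exact hxu ⟨hxBz.1, h⟩
  -- conclude using connectedness of the interval
  obtain ⟨t, htIcc, htJc, htIc⟩ := (isPreconnected_Icc (a := (0:ℝ)) (b := 1)) Jᶜ Iᶜ
    hJclosed.isOpen_compl hIclosed.isOpen_compl
    (fun t ht => by
      rcases hcover ht with h | h
      · exact Or.inl (hIJdisj t h)
      · exact Or.inr fun hI => hIJdisj t hI h)
    ⟨0, by norm_num, hIJdisj 0 h0I⟩
    ⟨1, by norm_num, fun h1I => hIJdisj 1 h1I h1J⟩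
  rcases hcover htIcc with h | h
  · exact htIc h
  · exact htJc h



/-- Komiya's finite lemma, by induction on a list of strategies. -/
lemma komiya_list {f : E → F → ℝ} (hf : Continuous fun p : E × F => f p.1 p.2)
    {Y : Set F} (hYconv : Convex ℝ Y) :
    ∀ (L : List F) (X : Set E), IsCompact X → Convex ℝ X → X.Nonempty →
    (∀ w ∈ Y, ConvexOn ℝ X fun u => f u w) → (∀ u ∈ X, ConcaveOn ℝ Y fun w => f u w) →
    (∀ y ∈ L, y ∈ Y) → ∀ {α : ℝ}, (∀ x ∈ X, ∃ y ∈ L, α < f x y) →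
    ∃ y ∈ Y, ∀ x ∈ X, α < f x y := by
  intro L
  induction L with
  | nil =>
    intro X _ _ hXne _ _ _ α hyp
    obtain ⟨x, hx⟩ := hXne
    obtain ⟨y, hy, -⟩ := hyp x hx
    exact absurd hy List.not_mem_nil
  | cons y₀ L ih =>
    intro X hXc hXconv hXne hcv hcc hmem α hyp
    have hy₀Y : y₀ ∈ Y := hmem y₀ List.mem_cons_self
    have hf0 : Continuous fun x => f x y₀ := hf.comp (continuous_id.prodMk continuous_const)
    -- the set where all of L fails
    set C := {x ∈ X | ∀ y ∈ L, f x y ≤ α} with hCdef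
    have hCy₀ : ∀ x ∈ C, α < f x y₀ := by
      intro x hx
      obtain ⟨y, hy, hlt⟩ := hyp x hx.1
      rcases List.mem_cons.1 hy with rfl | hyL
      · exact hlt
      · exact absurd (hx.2 y hyL) (not_le.2 hlt)
    by_cases hCne : C.Nonempty
    · -- find the elevated level β
      have hCclosed : IsClosed C := by
        have : C = X ∩ ⋂ y ∈ L, {x | f x y ≤ α} := by
          ext x; simp [hCdef, Set.mem_iInter]
        rw [this]
        exact hXc.isClosed.inter (isClosed_biInter fun y _ =>
          isClosed_Iic.preimage (hf.comp (continuous_id.prodMk continuous_const)))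
      have hCcompact : IsCompact C := hXc.of_isClosed_subset hCclosed (fun x hx => hx.1)
      obtain ⟨x₁, hx₁C, hx₁min⟩ := hCcompact.exists_isMinOn hCne hf0.continuousOn
      set β := (α + f x₁ y₀) / 2 with hβdef
      have hαβ : α < β := by
        have := hCy₀ x₁ hx₁C
        rw [hβdef]; linarith
      have hβC : ∀ x ∈ C, β < f x y₀ := by
        intro x hx
        have h1 := hx₁min hx
        have := hCy₀ x₁ hx₁C
        rw [hβdef]
        simp only [Set.mem_setOf_eq] at h1
        linarith
      set X' := {x ∈ X | f x y₀ ≤ β} with hX'def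
      by_cases hX'ne : X'.Nonempty
      · -- apply the inductive hypothesis on X'
        have hX'c : IsCompact X' :=
          hXc.of_isClosed_subset (hXc.isClosed.inter (isClosed_Iic.preimage hf0))
            (fun x hx => hx.1)
        have hX'conv : Convex ℝ X' := (hcv y₀ hy₀Y).convex_le β
        have hX'sub : X' ⊆ X := fun x hx => hx.1
        have hyp' : ∀ x ∈ X', ∃ y ∈ L, α < f x y := by
          intro x hx
          have hxC : x ∉ C := fun hC => absurd hx.2 (not_le.2 (hβC x hC))
          rw [hCdef] at hxC
          simp only [Set.mem_setOf_eq, not_and, not_forall, not_le] at hxC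
          obtain ⟨y, hy, hlt⟩ := hxC hx.1
          exact ⟨y, hy, hlt⟩
        obtain ⟨y', hy'Y, hy'⟩ := ih X' hX'c hX'conv hX'ne
          (fun w hw => (hcv w hw).subset hX'sub hX'conv)
          (fun u hu => hcc u (hX'sub hu))
          (fun y hy => hmem y (List.mem_cons_of_mem y₀ hy)) hyp'
        have hmax : ∀ x ∈ X, α < max (f x y₀) (f x y') := by
          intro x hx
          by_cases hx' : x ∈ X'
          · exact lt_max_of_lt_right (hy' x hx')
          · have : ¬ (f x y₀ ≤ β) := by
              intro hle
              exact hx' ⟨hx, hle⟩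
            exact lt_max_of_lt_left (lt_trans hαβ (not_le.1 this))
        exact komiya_two hf hXc hXconv hXne hYconv hcv hcc hy₀Y hy'Y hmax
      · -- X' is empty: y₀ itself works
        refine ⟨y₀, hy₀Y, fun x hx => ?_⟩
        by_contra hle
        exact hX'ne ⟨x, hx, le_trans (not_lt.1 hle) hαβ.le⟩
    · -- C is empty: the inductive hypothesis applies to all of X
      have hyp' : ∀ x ∈ X, ∃ y ∈ L, α < f x y := by
        intro x hx
        by_contra hno
        push_neg at hno
        exact hCne ⟨x, hx, fun y hy => hno y hy⟩
      exact ih X hXc hXconv hXne hcv hcc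
        (fun y hy => hmem y (List.mem_cons_of_mem y₀ hy)) hyp'

/-- Existence of a saddle point for a continuous convex–concave function on
compact convex sets. -/
lemma exists_saddle {f : E → F → ℝ} (hf : Continuous fun p : E × F => f p.1 p.2)
    {X : Set E} (hXc : IsCompact X) (hXconv : Convex ℝ X) (hXne : X.Nonempty)
    {Y : Set F} (hYc : IsCompact Y) (hYconv : Convex ℝ Y) (hYne : Y.Nonempty)
    (hcv : ∀ w ∈ Y, ConvexOn ℝ X fun u => f u w)
    (hcc : ∀ u ∈ X, ConcaveOn ℝ Y fun w => f u w) :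
    ∃ u ∈ X, ∃ w ∈ Y, (∀ w' ∈ Y, f u w' ≤ f u w) ∧ (∀ u' ∈ X, f u w ≤ f u' w) := by
  have hfu : ∀ u : E, Continuous (f u) := fun u =>
    hf.comp (continuous_const.prodMk continuous_id)
  have hfw : ∀ w : F, Continuous fun u => f u w := fun w =>
    hf.comp (continuous_id.prodMk continuous_const)
  -- best response in w
  have hbr : ∀ u : E, ∃ w ∈ Y, ∀ w' ∈ Y, f u w' ≤ f u w := fun u =>
    hYc.exists_isMaxOn hYne (hfu u).continuousOn
  choose wmax hwmaxY hwmax using hbr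
  set φ : E → ℝ := fun u => f u (wmax u) with hφdef
  -- lower bound for f on X ×ˢ Y
  obtain ⟨p₀, hp₀mem, hp₀⟩ := (hXc.prod hYc).exists_isMinOn (hXne.prod hYne) hf.continuousOn
  set c := f p₀.1 p₀.2 with hcdef
  have hccc : ∀ x ∈ X, ∀ y ∈ Y, c ≤ f x y := fun x hx y hy =>
    hp₀ (Set.mk_mem_prod hx hy)
  have hbdd : BddBelow (φ '' X) := by
    refine ⟨c, ?_⟩
    rintro v ⟨u, hu, rfl⟩
    exact hccc u hu (wmax u) (hwmaxY u)
  have hφne : (φ '' X).Nonempty := hXne.image φ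
  set vplus := sInf (φ '' X) with hvdef
  -- Claim A: for every α < vplus there is y ∈ Y good against all of X
  have claimA : ∀ α : ℝ, α < vplus → ∃ y ∈ Y, ∀ x ∈ X, α < f x y := by
    intro α hα
    set U : Y → Set E := fun w => {x | α < f x (w : F)} with hUdef
    have hUopen : ∀ w : Y, IsOpen (U w) := fun w =>
      isOpen_lt continuous_const (hfw w)
    have hcover : X ⊆ ⋃ w : Y, U w := by
      intro x hx
      have h1 : vplus ≤ φ x := csInf_le hbdd (Set.mem_image_of_mem φ hx)
      exact Set.mem_iUnion.2 ⟨⟨wmax x, hwmaxY x⟩, lt_of_lt_of_le hα h1⟩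
    obtain ⟨t, ht⟩ := hXc.elim_finite_subcover U hUopen hcover
    set L : List F := t.toList.map Subtype.val with hLdef
    have hLY : ∀ y ∈ L, y ∈ Y := by
      intro y hy
      rw [hLdef] at hy
      obtain ⟨w, -, rfl⟩ := List.mem_map.1 hy
      exact w.2
    have hyp : ∀ x ∈ X, ∃ y ∈ L, α < f x y := by
      intro x hx
      obtain ⟨w, hwt, hxU⟩ := Set.mem_iUnion₂.1 (ht hx)
      exact ⟨w.1, List.mem_map.2 ⟨w, Finset.mem_toList.2 hwt, rfl⟩, hxU⟩
    exact komiya_list hf hYconv L X hXc hXconv hXne hcv hcc hLY hyp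
  -- Claim B: a maximin point w*
  have claimB : ∃ w ∈ Y, ∀ u ∈ X, vplus ≤ f u w := by
    set K : ℕ → Set F := fun n => {w ∈ Y | ∀ u ∈ X, vplus - 1 / (n + 1) ≤ f u w} with hKdef
    have hKclosed : ∀ n, IsClosed (K n) := by
      intro n
      have : K n = Y ∩ ⋂ u ∈ X, {w | vplus - 1 / (n + 1) ≤ f u w} := by
        ext w; simp [hKdef, Set.mem_iInter]
      rw [this]
      exact hYc.isClosed.inter (isClosed_biInter fun u _ =>
        isClosed_le continuous_const (hfu u))
    have hKcompact : ∀ n, IsCompact (K n) :=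
      fun n => hYc.of_isClosed_subset (hKclosed n) (fun w hw => hw.1)
    have hKne : ∀ n, (K n).Nonempty := by
      intro n
      have hpos : (0:ℝ) < 1 / (n + 1) := by positivity
      obtain ⟨y, hyY, hy⟩ := claimA (vplus - 1 / (n + 1)) (by linarith)
      exact ⟨y, hyY, fun u hu => (hy u hu).le⟩
    have hKmono : ∀ n, K (n + 1) ⊆ K n := by
      intro n w hw
      refine ⟨hw.1, fun u hu => le_trans ?_ (hw.2 u hu)⟩
      have h1 : (1:ℝ) / (n + 1 + 1) ≤ 1 / (n + 1) :=
        one_div_le_one_div_of_le (by positivity) (by linarith)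
      push_cast
      linarith
    obtain ⟨w, hw⟩ := IsCompact.nonempty_iInter_of_sequence_nonempty_isCompact_isClosed
      K hKmono hKne (hKcompact 0) hKclosed
    have hwY : w ∈ Y := (Set.mem_iInter.1 hw 0).1
    refine ⟨w, hwY, fun u hu => ?_⟩
    by_contra hlt
    push_neg at hlt
    obtain ⟨n, hn⟩ := exists_nat_one_div_lt (by linarith : (0:ℝ) < vplus - f u w)
    have := (Set.mem_iInter.1 hw n).2 u hu
    push_cast at this hn
    linarith
  -- Claim C: a minimax point u*
  have claimC : ∃ u ∈ X, ∀ w ∈ Y, f u w ≤ vplus := by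
    set K : ℕ → Set E := fun n => {u ∈ X | ∀ w ∈ Y, f u w ≤ vplus + 1 / (n + 1)} with hKdef
    have hKclosed : ∀ n, IsClosed (K n) := by
      intro n
      have : K n = X ∩ ⋂ w ∈ Y, {u | f u w ≤ vplus + 1 / (n + 1)} := by
        ext u; simp [hKdef, Set.mem_iInter]
      rw [this]
      exact hXc.isClosed.inter (isClosed_biInter fun w _ =>
        isClosed_le (hfw w) continuous_const)
    have hKcompact : ∀ n, IsCompact (K n) :=
      fun n => hXc.of_isClosed_subset (hKclosed n) (fun u hu => hu.1)
    have hKne : ∀ n, (K n).Nonempty := by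
      intro n
      have hpos : (0:ℝ) < 1 / (n + 1) := by positivity
      obtain ⟨v, hvmem, hvlt⟩ := exists_lt_of_csInf_lt hφne
        (by linarith : vplus < vplus + 1 / (n + 1))
      obtain ⟨u, huX, rfl⟩ := hvmem
      exact ⟨u, huX, fun w hw => le_trans (hwmax u w hw) hvlt.le⟩
    have hKmono : ∀ n, K (n + 1) ⊆ K n := by
      intro n u hu
      refine ⟨hu.1, fun w hw => le_trans (hu.2 w hw) ?_⟩
      have h1 : (1:ℝ) / (n + 1 + 1) ≤ 1 / (n + 1) :=
        one_div_le_one_div_of_le (by positivity) (by linarith)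
      push_cast
      linarith
    obtain ⟨u, hu⟩ := IsCompact.nonempty_iInter_of_sequence_nonempty_isCompact_isClosed
      K hKmono hKne (hKcompact 0) hKclosed
    have huX : u ∈ X := (Set.mem_iInter.1 hu 0).1
    refine ⟨u, huX, fun w hw => ?_⟩
    by_contra hlt
    push_neg at hlt
    obtain ⟨n, hn⟩ := exists_nat_one_div_lt (by linarith : (0:ℝ) < f u w - vplus)
    have := (Set.mem_iInter.1 hu n).2 w hw
    push_cast at this hn
    linarith
  obtain ⟨u, huX, hu⟩ := claimC
  obtain ⟨w, hwY, hw⟩ := claimB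
  exact ⟨u, huX, w, hwY,
    fun w' hw' => le_trans (hu w' hw') (hw u huX),
    fun u' hu' => le_trans (hu w hwY) (hw u' hu')⟩

end Minimax

section MDPPlumbing

variable {S A B : Type*} [Fintype S] [Fintype A] [Fintype B]

/-- The per-state payoff function used throughout. -/
def fsAux (r : S → A → B → ℝ) (P : S → A → B → S → ℝ) (γ : ℝ)
    (h : S → (A → ℝ) → (B → ℝ) → ℝ) (V : S → ℝ) (s : S) (u : A → ℝ) (w : B → ℝ) : ℝ :=
  (∑ a, ∑ b, u a * w b * QV r P γ V s a b) + h s u w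

lemma Tsoft_eq_fsAux (r : S → A → B → ℝ) (P : S → A → B → S → ℝ) (γ : ℝ)
    (h : S → (A → ℝ) → (B → ℝ) → ℝ) (y : S → A → ℝ) (z : S → B → ℝ) (V : S → ℝ) (s : S) :
    Tsoft r P γ h y z V s = fsAux r P γ h V s (y s) (z s) := rfl

lemma TstarH_eq_fsAux (r : S → A → B → ℝ) (P : S → A → B → S → ℝ) (γ : ℝ)
    (h : S → (A → ℝ) → (B → ℝ) → ℝ) (V : S → ℝ) (s : S) :
    TstarH r P γ h V s = ⨅ u : stdSimplex ℝ A, ⨆ w : stdSimplex ℝ B,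
      fsAux r P γ h V s u.1 w.1 := rfl

/-- Linearity of the bilinear term in the first variable. -/
lemma bilin_left_linear (Q : A → B → ℝ) (z : B → ℝ) (u v : A → ℝ) (t c : ℝ) :
    (∑ a, ∑ b, (t • u + c • v) a * z b * Q a b)
      = t * (∑ a, ∑ b, u a * z b * Q a b) + c * (∑ a, ∑ b, v a * z b * Q a b) := by
  calc (∑ a, ∑ b, (t • u + c • v) a * z b * Q a b)
      = ∑ a, ∑ b, (t * (u a * z b * Q a b) + c * (v a * z b * Q a b)) := by
        refine Finset.sum_congr rfl fun a _ => Finset.sum_congr rfl fun b _ => ?_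
        simp only [Pi.add_apply, Pi.smul_apply, smul_eq_mul]
        ring
    _ = t * (∑ a, ∑ b, u a * z b * Q a b) + c * (∑ a, ∑ b, v a * z b * Q a b) := by
        simp only [Finset.sum_add_distrib, Finset.mul_sum]

/-- Linearity of the bilinear term in the second variable. -/
lemma bilin_right_linear (Q : A → B → ℝ) (u : A → ℝ) (w x : B → ℝ) (t c : ℝ) :
    (∑ a, ∑ b, u a * (t • w + c • x) b * Q a b)
      = t * (∑ a, ∑ b, u a * w b * Q a b) + c * (∑ a, ∑ b, u a * x b * Q a b) := by
  calc (∑ a, ∑ b, u a * (t • w + c • x) b * Q a b)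
      = ∑ a, ∑ b, (t * (u a * w b * Q a b) + c * (u a * x b * Q a b)) := by
        refine Finset.sum_congr rfl fun a _ => Finset.sum_congr rfl fun b _ => ?_
        simp only [Pi.add_apply, Pi.smul_apply, smul_eq_mul]
        ring
    _ = t * (∑ a, ∑ b, u a * w b * Q a b) + c * (∑ a, ∑ b, u a * x b * Q a b) := by
        simp only [Finset.sum_add_distrib, Finset.mul_sum]

/-- Monotone Lipschitz-type bound for the Bellman operator. -/
lemma tyz_bound (r : S → A → B → ℝ) (P : S → A → B → S → ℝ)
    (hP0 : ∀ s a b s', 0 ≤ P s a b s') (hP1 : ∀ s a b, ∑ s', P s a b s' = 1)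
    {γ : ℝ} (hγ0 : 0 ≤ γ)
    {y : S → A → ℝ} {z : S → B → ℝ} (hy : ∀ s, y s ∈ stdSimplex ℝ A)
    (hz : ∀ s, z s ∈ stdSimplex ℝ B)
    {V₁ V₂ : S → ℝ} {M : ℝ} (hM : ∀ s', V₂ s' ≤ V₁ s' + M) (s : S) :
    Tyz r P γ y z V₂ s ≤ Tyz r P γ y z V₁ s + γ * M := by
  have hQ : ∀ a b, QV r P γ V₂ s a b ≤ QV r P γ V₁ s a b + γ * M := by
    intro a b
    have h1 : ∑ s', P s a b s' * V₂ s' ≤ ∑ s', P s a b s' * (V₁ s' + M) :=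
      Finset.sum_le_sum fun s' _ => mul_le_mul_of_nonneg_left (hM s') (hP0 s a b s')
    have h2 : ∑ s', P s a b s' * (V₁ s' + M) = (∑ s', P s a b s' * V₁ s') + M := by
      simp only [mul_add, Finset.sum_add_distrib, ← Finset.sum_mul, hP1 s a b, one_mul]
    rw [QV, QV]
    have h3 := mul_le_mul_of_nonneg_left (le_trans h1 (le_of_eq h2)) hγ0
    rw [mul_add] at h3
    linarith
  have hnn : ∀ a b, 0 ≤ y s a * z s b := fun a b =>
    mul_nonneg ((hy s).1 a) ((hz s).1 b)
  rw [Tyz, Tyz]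
  have hsum1 : ∑ a, ∑ b, y s a * z s b = 1 := by
    have hb : ∀ a, ∑ b, y s a * z s b = y s a := by
      intro a
      rw [← Finset.mul_sum, (hz s).2, mul_one]
    rw [Finset.sum_congr rfl fun a _ => hb a, (hy s).2]
  calc ∑ a, ∑ b, y s a * z s b * QV r P γ V₂ s a b
      ≤ ∑ a, ∑ b, (y s a * z s b * QV r P γ V₁ s a b + y s a * z s b * (γ * M)) := by
        refine Finset.sum_le_sum fun a _ => Finset.sum_le_sum fun b _ => ?_
        rw [← mul_add]
        exact mul_le_mul_of_nonneg_left (hQ a b) (hnn a b)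
    _ = (∑ a, ∑ b, y s a * z s b * QV r P γ V₁ s a b)
        + (∑ a, ∑ b, y s a * z s b) * (γ * M) := by
        rw [Finset.sum_mul, ← Finset.sum_add_distrib]
        refine Finset.sum_congr rfl fun a _ => ?_
        rw [Finset.sum_mul, ← Finset.sum_add_distrib]
    _ = (∑ a, ∑ b, y s a * z s b * QV r P γ V₁ s a b) + γ * M := by
        rw [hsum1, one_mul]

/-- Comparison principle for the soft Bellman operator. -/
lemma tsoft_cmp [Nonempty S] (r : S → A → B → ℝ) (P : S → A → B → S → ℝ)
    (hP0 : ∀ s a b s', 0 ≤ P s a b s') (hP1 : ∀ s a b, ∑ s', P s a b s' = 1)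
    {γ : ℝ} (hγ0 : 0 < γ) (hγ1 : γ < 1) (h : S → (A → ℝ) → (B → ℝ) → ℝ)
    {y : S → A → ℝ} {z : S → B → ℝ} (hy : ∀ s, y s ∈ stdSimplex ℝ A)
    (hz : ∀ s, z s ∈ stdSimplex ℝ B)
    {V₁ V₂ : S → ℝ} (h₁ : ∀ s, Tsoft r P γ h y z V₁ s ≤ V₁ s)
    (h₂ : ∀ s, V₂ s ≤ Tsoft r P γ h y z V₂ s) : ∀ s, V₂ s ≤ V₁ s := by
  obtain ⟨s₀, -, hs₀⟩ := Finset.exists_max_image Finset.univ (fun s => V₂ s - V₁ s)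
    ⟨Classical.arbitrary S, Finset.mem_univ _⟩
  set M := V₂ s₀ - V₁ s₀ with hMdef
  have hM : ∀ s', V₂ s' ≤ V₁ s' + M := fun s' => by
    have := hs₀ s' (Finset.mem_univ s')
    rw [hMdef]
    linarith
  have key := tyz_bound r P hP0 hP1 hγ0.le hy hz hM s₀
  have h1 := h₁ s₀
  have h2 := h₂ s₀
  rw [Tsoft] at h1 h2
  have hMγ : M ≤ γ * M := by linarith [hMdef.le, hMdef.ge]
  have hM0 : M ≤ 0 := by
    by_contra hpos
    push_neg at hpos
    have hlt : γ * M < 1 * M := mul_lt_mul_of_pos_right hγ1 hpos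
    rw [one_mul] at hlt
    linarith
  intro s
  have := hs₀ s (Finset.mem_univ s)
  linarith

/-- Existence of a fixed point of the soft Bellman operator, via Banach. -/
lemma tsoft_exists_fixed [Nonempty S] (r : S → A → B → ℝ) (P : S → A → B → S → ℝ)
    (hP0 : ∀ s a b s', 0 ≤ P s a b s') (hP1 : ∀ s a b, ∑ s', P s a b s' = 1)
    {γ : ℝ} (hγ0 : 0 < γ) (hγ1 : γ < 1) (h : S → (A → ℝ) → (B → ℝ) → ℝ)
    {y : S → A → ℝ} {z : S → B → ℝ} (hy : ∀ s, y s ∈ stdSimplex ℝ A)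
    (hz : ∀ s, z s ∈ stdSimplex ℝ B) :
    ∃ V : S → ℝ, ∀ s, Tsoft r P γ h y z V s = V s := by
  set T : (S → ℝ) → (S → ℝ) := fun V => Tsoft r P γ h y z V with hTdef
  have hlip : ∀ V W : S → ℝ, dist (T V) (T W) ≤ γ * dist V W := by
    intro V W
    have hd0 : (0:ℝ) ≤ dist V W := dist_nonneg
    rw [dist_pi_le_iff (by positivity)]
    intro s
    rw [Real.dist_eq, abs_sub_le_iff]
    have hM1 : ∀ s', V s' ≤ W s' + dist V W := fun s' => by
      have h1 := dist_le_pi_dist V W s'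
      rw [Real.dist_eq] at h1
      have h2 := abs_sub_le_iff.1 h1
      linarith [h2.1]
    have hM2 : ∀ s', W s' ≤ V s' + dist V W := fun s' => by
      have h1 := dist_le_pi_dist V W s'
      rw [Real.dist_eq] at h1
      have h2 := abs_sub_le_iff.1 h1
      linarith [h2.2]
    have k1 := tyz_bound r P hP0 hP1 hγ0.le hy hz hM1 s
    have k2 := tyz_bound r P hP0 hP1 hγ0.le hy hz hM2 s
    constructor
    · show T V s - T W s ≤ γ * dist V W
      simp only [hTdef, Tsoft]
      linarith
    · show T W s - T V s ≤ γ * dist V W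
      simp only [hTdef, Tsoft]
      linarith
  have hK : ContractingWith γ.toNNReal T := by
    constructor
    · rw [← NNReal.coe_lt_coe, Real.coe_toNNReal _ hγ0.le, NNReal.coe_one]
      exact hγ1
    · refine LipschitzWith.of_dist_le_mul fun V W => ?_
      rw [Real.coe_toNNReal _ hγ0.le]
      exact hlip V W
  obtain ⟨V, hV, -⟩ := hK.exists_fixedPoint (fun _ => 0) (edist_ne_top _ _)
  exact ⟨V, fun s => congrFun hV s⟩

end MDPPlumbing

theorem unique_equilibrium_profile_pair
    [Nonempty S] [Nonempty A] [Nonempty B]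
    (r : S → A → B → ℝ) (P : S → A → B → S → ℝ)
    (hP0 : ∀ s a b s', 0 ≤ P s a b s')
    (hP1 : ∀ s a b, ∑ s', P s a b s' = 1)
    (γ : ℝ) (hγ0 : 0 < γ) (hγ1 : γ < 1)
    (h : S → (A → ℝ) → (B → ℝ) → ℝ)
    (hcont : ∀ s, Continuous (fun p : (A → ℝ) × (B → ℝ) => h s p.1 p.2))
    (μ₁ μ₂ : ℝ) (hμ₁ : 0 < μ₁) (hμ₂ : 0 < μ₂)
    (hconv : ∀ s, ∀ w ∈ stdSimplex ℝ B,
      StrongConvexOn (stdSimplex ℝ A) μ₁ (fun u => h s u w))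
    (hconc : ∀ s, ∀ u ∈ stdSimplex ℝ A,
      StrongConcaveOn (stdSimplex ℝ B) μ₂ (fun w => h s u w))
    (Vstar : S → ℝ) (hVfix : ∀ s, TstarH r P γ h Vstar s = Vstar s) :
    ∃! p : MinProf S A × MaxProf S B,
      (∀ s, Tsoft r P γ h p.1.1 p.2.1 Vstar s = Vstar s) ∧
      (∀ (z : MaxProf S B) (V' : S → ℝ),
        (∀ s, Tsoft r P γ h p.1.1 z.1 V' s = V' s) → ∀ s, V' s ≤ Vstar s) ∧
      (∀ (y : MinProf S A) (V'' : S → ℝ),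
        (∀ s, Tsoft r P γ h y.1 p.2.1 V'' s = V'' s) → ∀ s, Vstar s ≤ V'' s) := by
    classical
  -- notation
  set F := fsAux r P γ h Vstar with hFdef
  -- continuity of the per-state payoff
  have hfs_cont : ∀ s, Continuous fun p : (A → ℝ) × (B → ℝ) => F s p.1 p.2 := by
    intro s
    rw [hFdef]
    apply Continuous.add
    · apply continuous_finset_sum
      intro a _
      apply continuous_finset_sum
      intro b _
      exact (((continuous_apply a).comp continuous_fst).mul
        ((continuous_apply b).comp continuous_snd)).mul continuous_const
    · exact hcont s
  -- convexity data
  have hbil_cvx : ∀ (s : S) (w : B → ℝ), ConvexOn ℝ (stdSimplex ℝ A)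
      (fun u => ∑ a, ∑ b, u a * w b * QV r P γ Vstar s a b) := by
    intro s w
    refine ⟨convex_stdSimplex ℝ A, fun u _ v _ t c ht hc htc => ?_⟩
    simp only [smul_eq_mul]
    exact le_of_eq (bilin_left_linear _ w u v t c)
  have hbil_ccv : ∀ (s : S) (u : A → ℝ), ConcaveOn ℝ (stdSimplex ℝ B)
      (fun w => ∑ a, ∑ b, u a * w b * QV r P γ Vstar s a b) := by
    intro s u
    refine ⟨convex_stdSimplex ℝ B, fun w _ x _ t c ht hc htc => ?_⟩
    simp only [smul_eq_mul]
    exact ge_of_eq (bilin_right_linear _ u w x t c)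
  have hfs_cvx : ∀ s, ∀ w ∈ stdSimplex ℝ B, ConvexOn ℝ (stdSimplex ℝ A) (fun u => F s u w) :=
    fun s w hw => (hbil_cvx s w).add ((hconv s w hw).strictConvexOn hμ₁).convexOn
  have hfs_ccv : ∀ s, ∀ u ∈ stdSimplex ℝ A, ConcaveOn ℝ (stdSimplex ℝ B) (fun w => F s u w) :=
    fun s u hu => (hbil_ccv s u).add ((hconc s u hu).strictConcaveOn hμ₂).concaveOn
  have hfs_scvx : ∀ s, ∀ w ∈ stdSimplex ℝ B,
      StrictConvexOn ℝ (stdSimplex ℝ A) (fun u => F s u w) :=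
    fun s w hw => (hbil_cvx s w).add_strictConvexOn ((hconv s w hw).strictConvexOn hμ₁)
  have hfs_sccv : ∀ s, ∀ u ∈ stdSimplex ℝ A,
      StrictConcaveOn ℝ (stdSimplex ℝ B) (fun w => F s u w) :=
    fun s u hu => (hbil_ccv s u).add_strictConcaveOn ((hconc s u hu).strictConcaveOn hμ₂)
  -- nonemptiness of the simplices
  have hAne : (stdSimplex ℝ A).Nonempty :=
    ⟨_, single_mem_stdSimplex ℝ (Classical.arbitrary A)⟩
  have hBne : (stdSimplex ℝ B).Nonempty :=
    ⟨_, single_mem_stdSimplex ℝ (Classical.arbitrary B)⟩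
  -- the saddle point at each state
  have hsaddle : ∀ s : S, ∃ u ∈ stdSimplex ℝ A, ∃ w ∈ stdSimplex ℝ B,
      (∀ w' ∈ stdSimplex ℝ B, F s u w' ≤ F s u w) ∧
      (∀ u' ∈ stdSimplex ℝ A, F s u w ≤ F s u' w) := fun s =>
    exists_saddle (hfs_cont s) (isCompact_stdSimplex ℝ A) (convex_stdSimplex ℝ A) hAne
      (isCompact_stdSimplex ℝ B) (convex_stdSimplex ℝ B) hBne (hfs_cvx s) (hfs_ccv s)
  choose ustar huX wstar hwY husad hwsad using hsaddle
  -- the saddle value is Vstar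
  have hval : ∀ s, F s (ustar s) (wstar s) = Vstar s := by
    intro s
    haveI hNB : Nonempty {w // w ∈ stdSimplex ℝ B} := ⟨⟨wstar s, hwY s⟩⟩
    haveI hNA : Nonempty {u // u ∈ stdSimplex ℝ A} := ⟨⟨ustar s, huX s⟩⟩
    have hup : ∀ u : {u // u ∈ stdSimplex ℝ A},
        F s (ustar s) (wstar s) ≤ ⨆ w : {w // w ∈ stdSimplex ℝ B}, F s u.1 w.1 := by
      intro u
      have hcw : Continuous fun w => F s u.1 w :=
        (hfs_cont s).comp (continuous_const.prodMk continuous_id)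
      obtain ⟨w₀, hw₀, hmax⟩ := (isCompact_stdSimplex ℝ B).exists_isMaxOn hBne hcw.continuousOn
      have hb : BddAbove (Set.range fun w : {w // w ∈ stdSimplex ℝ B} => F s u.1 w.1) := by
        refine ⟨F s u.1 w₀, ?_⟩
        rintro x ⟨w, rfl⟩
        exact hmax w.2
      calc F s (ustar s) (wstar s) ≤ F s u.1 (wstar s) := hwsad s u.1 u.2
        _ ≤ _ := le_ciSup hb ⟨wstar s, hwY s⟩
    have hdown : (⨆ w : {w // w ∈ stdSimplex ℝ B}, F s (ustar s) w.1)
        ≤ F s (ustar s) (wstar s) := ciSup_le fun w => husad s w.1 w.2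
    have hTeq : TstarH r P γ h Vstar s
        = ⨅ u : {u // u ∈ stdSimplex ℝ A}, ⨆ w : {w // w ∈ stdSimplex ℝ B}, F s u.1 w.1 := by
      rw [hFdef]
      exact TstarH_eq_fsAux r P γ h Vstar s
    have hbb : BddBelow (Set.range fun u : {u // u ∈ stdSimplex ℝ A} =>
        ⨆ w : {w // w ∈ stdSimplex ℝ B}, F s u.1 w.1) := by
      refine ⟨F s (ustar s) (wstar s), ?_⟩
      rintro x ⟨u, rfl⟩
      exact hup u
    have h1 : TstarH r P γ h Vstar s = F s (ustar s) (wstar s) := by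
      rw [hTeq]
      exact le_antisymm (le_trans (ciInf_le hbb ⟨ustar s, huX s⟩) hdown) (le_ciInf hup)
    rw [← h1, hVfix s]
  have hTsoftF : ∀ (y : S → A → ℝ) (z : S → B → ℝ) (s : S),
      Tsoft r P γ h y z Vstar s = F s (y s) (z s) := by
    intro y z s
    rw [hFdef]
    exact Tsoft_eq_fsAux r P γ h y z Vstar s
  -- derived saddle facts
  have hc_sup : ∀ s, ∀ w ∈ stdSimplex ℝ B, F s (ustar s) w ≤ Vstar s :=
    fun s w hw => le_trans (husad s w hw) (hval s).le
  have hc_inf : ∀ s, ∀ u ∈ stdSimplex ℝ A, Vstar s ≤ F s u (wstar s) := by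
    intro s u hu
    have h1 := hwsad s u hu
    rw [hval s] at h1
    exact h1
  -- the three conditions for the canonical pair
  have c1 : ∀ s, Tsoft r P γ h ustar wstar Vstar s = Vstar s := by
    intro s
    rw [hTsoftF]
    exact hval s
  have c2 : ∀ (z : MaxProf S B) (V' : S → ℝ),
      (∀ s, Tsoft r P γ h ustar z.1 V' s = V' s) → ∀ s, V' s ≤ Vstar s := by
    intro z V' hV'
    refine tsoft_cmp r P hP0 hP1 hγ0 hγ1 h huX z.2 (fun s => ?_) (fun s => (hV' s).ge)
    rw [hTsoftF]
    exact hc_sup s _ (z.2 s)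
  have c3 : ∀ (y : MinProf S A) (V'' : S → ℝ),
      (∀ s, Tsoft r P γ h y.1 wstar V'' s = V'' s) → ∀ s, Vstar s ≤ V'' s := by
    intro y V'' hV''
    refine tsoft_cmp r P hP0 hP1 hγ0 hγ1 h y.2 hwY (fun s => (hV'' s).le) (fun s => ?_)
    rw [hTsoftF]
    exact hc_inf s _ (y.2 s)
  -- key: any pair satisfying the conditions is a per-state saddle point
  have hkey : ∀ (yq : MinProf S A) (zq : MaxProf S B),
      (∀ s, Tsoft r P γ h yq.1 zq.1 Vstar s = Vstar s) →
      (∀ (z : MaxProf S B) (V' : S → ℝ),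
        (∀ s, Tsoft r P γ h yq.1 z.1 V' s = V' s) → ∀ s, V' s ≤ Vstar s) →
      (∀ (y : MinProf S A) (V'' : S → ℝ),
        (∀ s, Tsoft r P γ h y.1 zq.1 V'' s = V'' s) → ∀ s, Vstar s ≤ V'' s) →
      ∀ s, (∀ w ∈ stdSimplex ℝ B, F s (yq.1 s) w ≤ Vstar s) ∧
           (∀ u ∈ stdSimplex ℝ A, Vstar s ≤ F s u (zq.1 s)) := by
    intro yq zq hq1 hq2 hq3
    have hA : ∀ s, ∀ w ∈ stdSimplex ℝ B, F s (yq.1 s) w ≤ Vstar s := by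
      have hex : ∀ s, ∃ w ∈ stdSimplex ℝ B, ∀ w' ∈ stdSimplex ℝ B,
          F s (yq.1 s) w' ≤ F s (yq.1 s) w := fun s =>
        (isCompact_stdSimplex ℝ B).exists_isMaxOn hBne
          (((hfs_cont s).comp (continuous_const.prodMk continuous_id)).continuousOn)
      choose z' hz'mem hz'max using hex
      obtain ⟨V', hV'⟩ := tsoft_exists_fixed r P hP0 hP1 hγ0 hγ1 h yq.2 hz'mem
      have hle : ∀ s, V' s ≤ Vstar s := hq2 ⟨z', hz'mem⟩ V' hV'
      have hge : ∀ s, Vstar s ≤ V' s := by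
        refine tsoft_cmp r P hP0 hP1 hγ0 hγ1 h yq.2 hz'mem
          (fun s => (hV' s).le) (fun s => ?_)
        calc Vstar s = Tsoft r P γ h yq.1 zq.1 Vstar s := (hq1 s).symm
          _ = F s (yq.1 s) (zq.1 s) := hTsoftF _ _ s
          _ ≤ F s (yq.1 s) (z' s) := hz'max s _ (zq.2 s)
          _ = Tsoft r P γ h yq.1 z' Vstar s := (hTsoftF _ _ s).symm
      have hVeq : V' = Vstar := funext fun s => le_antisymm (hle s) (hge s)
      intro s w hw
      calc F s (yq.1 s) w ≤ F s (yq.1 s) (z' s) := hz'max s w hw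
        _ = Tsoft r P γ h yq.1 z' Vstar s := (hTsoftF _ _ s).symm
        _ = Tsoft r P γ h yq.1 z' V' s := by rw [hVeq]
        _ = V' s := hV' s
        _ = Vstar s := by rw [hVeq]
    have hB : ∀ s, ∀ u ∈ stdSimplex ℝ A, Vstar s ≤ F s u (zq.1 s) := by
      have hex : ∀ s, ∃ u ∈ stdSimplex ℝ A, ∀ u' ∈ stdSimplex ℝ A,
          F s u (zq.1 s) ≤ F s u' (zq.1 s) := fun s =>
        (isCompact_stdSimplex ℝ A).exists_isMinOn hAne
          (((hfs_cont s).comp (continuous_id.prodMk continuous_const)).continuousOn)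
      choose y' hy'mem hy'min using hex
      obtain ⟨V'', hV''⟩ := tsoft_exists_fixed r P hP0 hP1 hγ0 hγ1 h hy'mem zq.2
      have hge : ∀ s, Vstar s ≤ V'' s := hq3 ⟨y', hy'mem⟩ V'' hV''
      have hle : ∀ s, V'' s ≤ Vstar s := by
        refine tsoft_cmp r P hP0 hP1 hγ0 hγ1 h hy'mem zq.2
          (fun s => ?_) (fun s => (hV'' s).ge)
        calc Tsoft r P γ h y' zq.1 Vstar s = F s (y' s) (zq.1 s) := hTsoftF _ _ s
          _ ≤ F s (yq.1 s) (zq.1 s) := hy'min s _ (yq.2 s)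
          _ = Tsoft r P γ h yq.1 zq.1 Vstar s := (hTsoftF _ _ s).symm
          _ = Vstar s := hq1 s
      have hVeq : V'' = Vstar := funext fun s => le_antisymm (hle s) (hge s)
      intro s u hu
      calc Vstar s = V'' s := by rw [hVeq]
        _ = Tsoft r P γ h y' zq.1 V'' s := (hV'' s).symm
        _ = Tsoft r P γ h y' zq.1 Vstar s := by rw [hVeq]
        _ = F s (y' s) (zq.1 s) := hTsoftF _ _ s
        _ ≤ F s u (zq.1 s) := hy'min s u hu
    exact fun s => ⟨hA s, hB s⟩
  -- assemble
  refine ⟨(⟨ustar, huX⟩, ⟨wstar, hwY⟩), ⟨c1, c2, c3⟩, ?_⟩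
  rintro ⟨yq, zq⟩ ⟨hq1, hq2, hq3⟩
  have hq := hkey yq zq hq1 hq2 hq3
  -- the min component agrees
  have hyeq : ∀ s, yq.1 s = ustar s := by
    intro s
    by_contra hne
    have e1 : F s (yq.1 s) (wstar s) = Vstar s :=
      le_antisymm ((hq s).1 (wstar s) (hwY s)) (hc_inf s _ (yq.2 s))
    have e2 : F s (ustar s) (wstar s) = Vstar s := hval s
    have hmid : (1/2 : ℝ) • yq.1 s + (1/2 : ℝ) • ustar s ∈ stdSimplex ℝ A :=
      convex_stdSimplex ℝ A (yq.2 s) (huX s) (by norm_num) (by norm_num) (by norm_num)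
    have hstrict := (hfs_scvx s (wstar s) (hwY s)).2 (yq.2 s) (huX s) hne
      (by norm_num : (0:ℝ) < 1/2) (by norm_num : (0:ℝ) < 1/2) (by norm_num)
    have hlow := hc_inf s _ hmid
    simp only [smul_eq_mul] at hstrict
    rw [e1, e2] at hstrict
    linarith
  -- the max component agrees
  have hzeq : ∀ s, zq.1 s = wstar s := by
    intro s
    by_contra hne
    have e1 : F s (ustar s) (zq.1 s) = Vstar s :=
      le_antisymm (hc_sup s _ (zq.2 s)) ((hq s).2 (ustar s) (huX s))
    have e2 : F s (ustar s) (wstar s) = Vstar s := hval s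
    have hmid : (1/2 : ℝ) • zq.1 s + (1/2 : ℝ) • wstar s ∈ stdSimplex ℝ B :=
      convex_stdSimplex ℝ B (zq.2 s) (hwY s) (by norm_num) (by norm_num) (by norm_num)
    have hstrict := (hfs_sccv s (ustar s) (huX s)).2 (zq.2 s) (hwY s) hne
      (by norm_num : (0:ℝ) < 1/2) (by norm_num : (0:ℝ) < 1/2) (by norm_num)
    have hhigh := hc_sup s _ hmid
    simp only [smul_eq_mul] at hstrict
    rw [e1, e2] at hstrict
    linarith
  have h1 : yq = (⟨ustar, huX⟩ : MinProf S A) := Subtype.ext (funext hyeq)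
  have h2 : zq = (⟨wstar, hwY⟩ : MaxProf S B) := Subtype.ext (funext hzeq)
  rw [h1, h2]
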